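/- arXiv:math/0509716 — 2 statements merged into one kernel-verified Lean document; each statement's English description precedes it below -/
import Mathlib

section
/- Let G be a connected strongly regular graph of diameter 2 with parameters (ν, k, λ, μ), and let r = (1/2)·((λ − μ) + √((λ − μ)^2 + 4(k − μ))). Then c_2(G)^2 ≥ 4·(ν − k − 1)·(k − r) / (k·(ν − k + r)). -/
open scoped BigOperators

open Finset Matrix SimpleGraph

set_option maxHeartbeats 1000000

lemma quad_bound {V : Type*} [Fintype V] [DecidableEq V] (G : SimpleGraph V)
    [DecidableRel G.Adj] {n k l μ : ℕ} (hsrg : G.IsSRGWith n k l μ)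
    (r s : ℝ) (hrs : r + s = (l : ℝ) - μ) (hprod : r * s = -((k : ℝ) - μ))
    (hlt : s < r) (f : V → ℝ) (hf : ∑ v, f v = 0) :
    f ⬝ᵥ (G.adjMatrix ℝ *ᵥ f) ≤ r * (f ⬝ᵥ f) := by
  set A := G.adjMatrix ℝ with hA
  set P := A *ᵥ f with hP
  have hC : Gᶜ.adjMatrix ℝ *ᵥ f = -f - P := by
    funext u
    have key : ∀ v, Gᶜ.adjMatrix ℝ u v * f v
        = f v - (if u = v then f v else 0) - A u v * f v := by
      intro v
      by_cases h1 : u = v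
      · subst h1; simp [hA, adjMatrix_apply]
      · by_cases h2 : G.Adj u v <;>
          simp [hA, adjMatrix_apply, compl_adj, h1, h2]
    show ∑ v, Gᶜ.adjMatrix ℝ u v * f v = _
    rw [Finset.sum_congr rfl fun v _ => key v]
    have : ∑ v, A u v * f v = P u := rfl
    simp [Finset.sum_sub_distrib, hf, this]
  have hAA : A *ᵥ P = ((k : ℝ) - μ) • f + ((l : ℝ) - μ) • P := by
    have hM := hsrg.matrix_eq (α := ℝ)
    have h2 : A *ᵥ P = (A ^ 2) *ᵥ f := by
      rw [pow_two, ← Matrix.mulVec_mulVec]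
    have h1 : ∀ (c : ℕ) (M : Matrix V V ℝ), (c • M) *ᵥ f = (c : ℝ) • (M *ᵥ f) := by
      intro c M
      rw [← Nat.cast_smul_eq_nsmul ℝ, Matrix.smul_mulVec]
    rw [h2, hM, Matrix.add_mulVec, Matrix.add_mulVec, h1, h1, h1, Matrix.one_mulVec, hC]
    funext u
    simp only [Pi.add_apply, Pi.smul_apply, Pi.sub_apply, Pi.neg_apply, smul_eq_mul]
    ring
  have hh : A *ᵥ (P - r • f) = s • (P - r • f) := by
    rw [Matrix.mulVec_sub, Matrix.mulVec_smul, hAA]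
    funext u
    simp only [Pi.sub_apply, Pi.add_apply, Pi.smul_apply, smul_eq_mul]
    have h1 : (k : ℝ) - μ = -(r * s) := by linarith
    have h2 : (l : ℝ) - μ = r + s := hrs.symm
    rw [h1, h2]; ring
  set h := P - r • f with hhdef
  have hsym : P ⬝ᵥ h = f ⬝ᵥ (A *ᵥ h) := by
    have ht : Aᵀ = A := G.transpose_adjMatrix
    conv_lhs => rw [hP, ← ht, Matrix.mulVec_transpose]
    rw [← Matrix.dotProduct_mulVec]
  have hdot : h ⬝ᵥ h = (s - r) * (f ⬝ᵥ h) := by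
    have e1 : h ⬝ᵥ h = P ⬝ᵥ h - r * (f ⬝ᵥ h) := by
      rw [hhdef, sub_dotProduct, smul_dotProduct, smul_eq_mul]
    rw [e1, hsym, hh, dotProduct_smul, smul_eq_mul]
    ring
  have hnn : 0 ≤ h ⬝ᵥ h := Finset.sum_nonneg fun i _ => mul_self_nonneg _
  have hfh : f ⬝ᵥ h ≤ 0 := by
    by_contra hcon
    push_neg at hcon
    nlinarith
  have hfin : f ⬝ᵥ P = f ⬝ᵥ h + r * (f ⬝ᵥ f) := by
    rw [hhdef, dotProduct_sub, dotProduct_smul, smul_eq_mul]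
    ring
  show f ⬝ᵥ P ≤ r * (f ⬝ᵥ f)
  rw [hfin]
  linarith

lemma embed_bound {V : Type*} [Fintype V] [DecidableEq V] (G : SimpleGraph V)
    [DecidableRel G.Adj] {ν k l μ : ℕ} (hsrg : G.IsSRGWith ν k l μ)
    (r s : ℝ) (hrs : r + s = (l : ℝ) - μ) (hprod : r * s = -((k : ℝ) - μ))
    (hlt : s < r) (hνk : k + 1 ≤ ν) (hkr : r ≤ (k : ℝ)) (hplus : 0 ≤ (ν : ℝ) - k + r)
    (hdist2 : ∀ u v : V, u ≠ v → ¬G.Adj u v → G.dist u v = 2)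
    (D : ℝ) (hD0 : 0 ≤ D) (m : ℕ) (ρ : V → EuclideanSpace ℝ (Fin m))
    (hρ : ∀ x y : V, (G.dist x y : ℝ) ≤ ‖ρ x - ρ y‖ ∧ ‖ρ x - ρ y‖ ≤ D * (G.dist x y : ℝ)) :
    4 * (ν : ℝ) * ((ν : ℝ) - k - 1) * ((k : ℝ) - r) ≤ (ν : ℝ) * k * ((ν : ℝ) - k + r) * D ^ 2 := by
  have hν : Fintype.card V = ν := hsrg.card
  have hν0 : 0 < (ν : ℝ) := by
    have : 0 < ν := by omega
    exact_mod_cast this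
  set A := G.adjMatrix ℝ with hA
  -- centered coordinates
  set f : Fin m → V → ℝ := fun i v => ρ v i - (∑ u, ρ u i) / ν with hf
  have hfsum : ∀ i, ∑ v, f i v = 0 := by
    intro i
    simp only [hf, Finset.sum_sub_distrib, Finset.sum_const, card_univ, hν, nsmul_eq_mul]
    field_simp
    ring
  have hfdiff : ∀ i u v, f i u - f i v = ρ u i - ρ v i := by
    intro i u v; simp only [hf]; ring
  set dsq : V → V → ℝ := fun u v => ∑ i, (f i u - f i v) ^ 2 with hdsq
  have hnorm : ∀ u v, dsq u v = ‖ρ u - ρ v‖ ^ 2 := by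
    intro u v
    rw [EuclideanSpace.norm_eq, Real.sq_sqrt (by positivity)]
    refine Finset.sum_congr rfl fun i _ => ?_
    rw [hfdiff]
    simp [Real.norm_eq_abs, sq_abs]
  have hdsq_nonneg : ∀ u v, 0 ≤ dsq u v := fun u v =>
    Finset.sum_nonneg fun i _ => sq_nonneg _
  have hdsq_self : ∀ u, dsq u u = 0 := by
    intro u; simp [hdsq]
  -- row sums of A
  have hrow : ∀ u, ∑ v, A u v = (k : ℝ) := by
    intro u
    simp only [hA, adjMatrix_apply]
    rw [Finset.sum_boole]
    have : Finset.univ.filter (G.Adj u) = G.neighborFinset u :=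
      G.neighborFinset_eq_filter.symm
    rw [this, G.card_neighborFinset_eq_degree]
    exact_mod_cast congrArg Nat.cast (hsrg.regular u)
  have hsymA : ∀ u v, A u v = A v u := by
    intro u v; simp [hA, adjMatrix_apply, G.adj_comm]
  have hcol : ∀ v, ∑ u, A u v = (k : ℝ) := by
    intro v
    calc ∑ u, A u v = ∑ u, A v u := Finset.sum_congr rfl fun u _ => hsymA u v
      _ = (k : ℝ) := hrow v
  -- expansion of quadratic forms
  have hexpand : ∀ i, ∑ u, ∑ v, A u v * (f i u - f i v) ^ 2
      = 2 * k * (∑ v, f i v ^ 2) - 2 * ((f i) ⬝ᵥ (A *ᵥ (f i))) := by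
    intro i
    have e1 : ∀ u v, A u v * (f i u - f i v) ^ 2
        = A u v * f i u ^ 2 + A u v * f i v ^ 2 - 2 * (f i u * (A u v * f i v)) := by
      intro u v; ring
    simp only [e1, Finset.sum_sub_distrib, Finset.sum_add_distrib]
    have e2 : ∑ u, ∑ v, A u v * f i u ^ 2 = (k : ℝ) * ∑ u, f i u ^ 2 := by
      rw [Finset.mul_sum]
      refine Finset.sum_congr rfl fun u _ => ?_
      rw [← Finset.sum_mul, hrow]
    have e3 : ∑ u, ∑ v, A u v * f i v ^ 2 = (k : ℝ) * ∑ v, f i v ^ 2 := by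
      rw [Finset.sum_comm, Finset.mul_sum]
      refine Finset.sum_congr rfl fun v _ => ?_
      rw [← Finset.sum_mul, hcol]
    have e4 : ∑ u, ∑ v, f i u * (A u v * f i v) = (f i) ⬝ᵥ (A *ᵥ (f i)) := by
      refine Finset.sum_congr rfl fun u _ => ?_
      rw [← Finset.mul_sum]
      rfl
    have e5 : ∑ u, ∑ v, 2 * (f i u * (A u v * f i v))
        = 2 * ∑ u, ∑ v, f i u * (A u v * f i v) := by
      rw [Finset.mul_sum]
      exact Finset.sum_congr rfl fun u _ => (Finset.mul_sum _ _ _).symm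
    rw [e2, e3, e5, e4]
    ring
  have gen : ∀ X : Fin m → V → V → ℝ, ∑ u, ∑ v, ∑ i, X i u v = ∑ i, ∑ u, ∑ v, X i u v := by
    intro X
    calc ∑ u, ∑ v, ∑ i, X i u v = ∑ u, ∑ i, ∑ v, X i u v :=
          Finset.sum_congr rfl fun u _ => Finset.sum_comm
      _ = ∑ i, ∑ u, ∑ v, X i u v := Finset.sum_comm
  set Sig : ℝ := ∑ i, ∑ v, f i v ^ 2 with hSig
  have hSig0 : 0 ≤ Sig := Finset.sum_nonneg fun i _ =>
    Finset.sum_nonneg fun v _ => sq_nonneg _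
  set T : ℝ := ∑ u, ∑ v, A u v * dsq u v with hT
  -- T as sum over coordinates
  have hTswap : T = ∑ i, ∑ u, ∑ v, A u v * (f i u - f i v) ^ 2 := by
    rw [hT, ← gen (fun i u v => A u v * (f i u - f i v) ^ 2)]
    refine Finset.sum_congr rfl fun u _ => Finset.sum_congr rfl fun v _ => ?_
    exact Finset.mul_sum _ _ _
  have hTge : 2 * ((k : ℝ) - r) * Sig ≤ T := by
    rw [hTswap, hSig]
    have : ∀ i : Fin m, i ∈ Finset.univ →
        2 * ((k : ℝ) - r) * ∑ v, f i v ^ 2 ≤ ∑ u, ∑ v, A u v * (f i u - f i v) ^ 2 := by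
      intro i _
      rw [hexpand i]
      have hq := quad_bound G hsrg r s hrs hprod hlt (f i) (hfsum i)
      have hff : (f i) ⬝ᵥ (f i) = ∑ v, f i v ^ 2 := by
        simp [dotProduct, sq]
      rw [hff] at hq
      nlinarith [Finset.sum_nonneg (fun v (_ : v ∈ Finset.univ) => sq_nonneg (f i v))]
    calc 2 * ((k : ℝ) - r) * ∑ i, ∑ v, f i v ^ 2
        = ∑ i, 2 * ((k : ℝ) - r) * ∑ v, f i v ^ 2 := by rw [Finset.mul_sum]
      _ ≤ _ := Finset.sum_le_sum this
  -- total sum of dsq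
  have htotal : ∑ u, ∑ v, dsq u v = 2 * ν * Sig := by
    have per : ∀ i : Fin m, ∑ u, ∑ v, (f i u - f i v) ^ 2 = 2 * ν * ∑ v, f i v ^ 2 := by
      intro i
      have e1 : ∀ u v : V, (f i u - f i v) ^ 2
          = f i u ^ 2 + f i v ^ 2 - 2 * (f i u * f i v) := by intro u v; ring
      simp only [e1, Finset.sum_sub_distrib, Finset.sum_add_distrib, Finset.sum_const,
        card_univ, hν, nsmul_eq_mul, ← Finset.mul_sum, ← Finset.sum_mul, hfsum i]
      ring
    calc ∑ u, ∑ v, dsq u v = ∑ i, ∑ u, ∑ v, (f i u - f i v) ^ 2 :=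
          gen (fun i u v => (f i u - f i v) ^ 2)
      _ = ∑ i : Fin m, 2 * (ν : ℝ) * ∑ v, f i v ^ 2 :=
          Finset.sum_congr rfl fun i _ => per i
      _ = 2 * ν * Sig := by rw [hSig, Finset.mul_sum]
  -- split into adjacency part and distance-2 part
  set S2 : ℝ := ∑ u, ∑ v, (if u ≠ v ∧ ¬ G.Adj u v then dsq u v else 0) with hS2
  have hsplit : ∑ u, ∑ v, dsq u v = T + S2 := by
    rw [hT, hS2, ← Finset.sum_add_distrib]
    refine Finset.sum_congr rfl fun u _ => ?_
    rw [← Finset.sum_add_distrib]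
    refine Finset.sum_congr rfl fun v _ => ?_
    by_cases h1 : u = v
    · subst h1
      simp [hA, adjMatrix_apply, hdsq_self u]
    · by_cases h2 : G.Adj u v
      · simp [hA, adjMatrix_apply, h1, h2]
      · simp [hA, adjMatrix_apply, h1, h2]
  -- lower bound on S2
  have hcount : ∀ u : V, (Finset.univ.filter (fun v => u ≠ v ∧ ¬ G.Adj u v)).card
      = ν - (k + 1) := by
    intro u
    have hfilt : Finset.univ.filter (fun v => u ≠ v ∧ ¬ G.Adj u v)
        = Finset.univ \ insert u (G.neighborFinset u) := by
      ext v
      simp only [Finset.mem_filter, Finset.mem_univ, true_and, Finset.mem_sdiff,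
        Finset.mem_insert, SimpleGraph.mem_neighborFinset, ne_eq]
      constructor
      · rintro ⟨h1, h2⟩ h3
        rcases h3 with h3 | h3
        · exact h1 h3.symm
        · exact h2 h3
      · intro h
        push_neg at h
        exact ⟨fun he => h.1 he.symm, h.2⟩
    rw [hfilt, Finset.card_sdiff_of_subset (Finset.subset_univ _), Finset.card_univ, hν,
      Finset.card_insert_of_notMem (G.notMem_neighborFinset_self u),
      G.card_neighborFinset_eq_degree, hsrg.regular u]
  have hS2ge : 4 * (ν : ℝ) * ((ν : ℝ) - k - 1) ≤ S2 := by
    have hterm : ∀ u v : V, (if u ≠ v ∧ ¬ G.Adj u v then (4 : ℝ) else 0)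
        ≤ (if u ≠ v ∧ ¬ G.Adj u v then dsq u v else 0) := by
      intro u v
      by_cases hc : u ≠ v ∧ ¬ G.Adj u v
      · rw [if_pos hc, if_pos hc]
        have hd : G.dist u v = 2 := hdist2 u v hc.1 hc.2
        have h1 := (hρ u v).1
        rw [hd] at h1
        push_cast at h1
        rw [hnorm]
        nlinarith [norm_nonneg (ρ u - ρ v)]
      · rw [if_neg hc, if_neg hc]
    have hsum : ∑ u : V, ∑ v : V, (if u ≠ v ∧ ¬ G.Adj u v then (4 : ℝ) else 0)
        = 4 * (ν : ℝ) * ((ν : ℝ) - k - 1) := by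
      have inner : ∀ u : V, ∑ v : V, (if u ≠ v ∧ ¬ G.Adj u v then (4 : ℝ) else 0)
          = 4 * ((ν : ℝ) - k - 1) := by
        intro u
        rw [Finset.sum_ite, Finset.sum_const, Finset.sum_const]
        rw [hcount u]
        have hcast : ((ν - (k + 1) : ℕ) : ℝ) = (ν : ℝ) - k - 1 := by
          have := hνk
          push_cast [Nat.cast_sub hνk]
          ring
        simp [hcast]
        ring
      rw [Finset.sum_congr rfl fun u _ => inner u, Finset.sum_const, card_univ, hν,
        nsmul_eq_mul]
      ring
    calc 4 * (ν : ℝ) * ((ν : ℝ) - k - 1)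
        = ∑ u : V, ∑ v : V, (if u ≠ v ∧ ¬ G.Adj u v then (4 : ℝ) else 0) := hsum.symm
      _ ≤ S2 := Finset.sum_le_sum fun u _ => Finset.sum_le_sum fun v _ => hterm u v
  -- upper bound on T
  have hTle : T ≤ (ν : ℝ) * k * D ^ 2 := by
    have hterm : ∀ u v : V, A u v * dsq u v ≤ A u v * D ^ 2 := by
      intro u v
      by_cases h2 : G.Adj u v
      · have hd : G.dist u v = 1 := SimpleGraph.dist_eq_one_iff_adj.mpr h2
        have h1 := (hρ u v).2
        rw [hd] at h1
        simp only [Nat.cast_one, mul_one] at h1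
        have : dsq u v ≤ D ^ 2 := by
          rw [hnorm]
          nlinarith [norm_nonneg (ρ u - ρ v)]
        have hA1 : A u v = 1 := by simp [hA, adjMatrix_apply, h2]
        rw [hA1, one_mul, one_mul]
        exact this
      · have hA0 : A u v = 0 := by simp [hA, adjMatrix_apply, h2]
        simp [hA0]
    calc T ≤ ∑ u, ∑ v, A u v * D ^ 2 :=
          Finset.sum_le_sum fun u _ => Finset.sum_le_sum fun v _ => hterm u v
      _ = (ν : ℝ) * k * D ^ 2 := by
        have : ∀ u : V, ∑ v, A u v * D ^ 2 = (k : ℝ) * D ^ 2 := by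
          intro u
          rw [← Finset.sum_mul, hrow]
        rw [Finset.sum_congr rfl fun u _ => this u, Finset.sum_const, card_univ, hν,
          nsmul_eq_mul]
        ring
  -- combine everything
  have hS2eq : S2 = 2 * ν * Sig - T := by
    have := hsplit
    rw [htotal] at this
    linarith
  have hkr' : (0 : ℝ) ≤ (k : ℝ) - r := by linarith
  have step1 : 4 * (ν : ℝ) * ((ν : ℝ) - k - 1) * ((k : ℝ) - r) ≤ ((k : ℝ) - r) * S2 := by
    calc 4 * (ν : ℝ) * ((ν : ℝ) - k - 1) * ((k : ℝ) - r)
        = ((k : ℝ) - r) * (4 * (ν : ℝ) * ((ν : ℝ) - k - 1)) := by ring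
      _ ≤ ((k : ℝ) - r) * S2 := mul_le_mul_of_nonneg_left hS2ge hkr'
  have step2 : ((k : ℝ) - r) * S2 ≤ ((ν : ℝ) - k + r) * T := by
    rw [hS2eq]
    have h1 : (ν : ℝ) * (2 * ((k : ℝ) - r) * Sig) ≤ (ν : ℝ) * T :=
      mul_le_mul_of_nonneg_left hTge (le_of_lt hν0)
    nlinarith
  have step3 : ((ν : ℝ) - k + r) * T ≤ ((ν : ℝ) - k + r) * ((ν : ℝ) * k * D ^ 2) :=
    mul_le_mul_of_nonneg_left hTle hplus
  calc 4 * (ν : ℝ) * ((ν : ℝ) - k - 1) * ((k : ℝ) - r)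
      ≤ ((ν : ℝ) - k + r) * ((ν : ℝ) * k * D ^ 2) := le_trans step1 (le_trans step2 step3)
    _ = (ν : ℝ) * k * ((ν : ℝ) - k + r) * D ^ 2 := by ring

/-- The least distortion `c₂(G)` of an embedding of the connected graph `G`
(with its shortest path metric) into Euclidean space. -/
noncomputable def leastDistortion {V : Type*} [Fintype V] (G : SimpleGraph V) : ℝ :=
  sInf {D : ℝ | ∃ (m : ℕ) (ρ : V → EuclideanSpace ℝ (Fin m)),
    ∀ x y : V, (G.dist x y : ℝ) ≤ ‖ρ x - ρ y‖ ∧ ‖ρ x - ρ y‖ ≤ D * (G.dist x y : ℝ)}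

/-- For a connected strongly regular graph of diameter `2` with parameters
`(ν, k, λ, μ)` and larger nontrivial eigenvalue
`r = ((λ−μ) + √((λ−μ)² + 4(k−μ)))/2` we have
`c₂(G)² ≥ 4(ν−k−1)(k−r)/(k(ν−k+r))`. -/
theorem stmt14 {V : Type*} [Fintype V] (G : SimpleGraph V) [DecidableRel G.Adj]
    (ν k l μ : ℕ) (hsrg : G.IsSRGWith ν k l μ) (hconn : G.Connected)
    (hdiam_le : ∀ x y : V, G.dist x y ≤ 2) (hdiam_eq : ∃ x y : V, G.dist x y = 2)
    (r : ℝ)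
    (hr : r = (((l : ℝ) - (μ : ℝ)) +
      Real.sqrt (((l : ℝ) - (μ : ℝ)) ^ 2 + 4 * ((k : ℝ) - (μ : ℝ)))) / 2) :
    leastDistortion G ^ 2 ≥
      4 * ((ν : ℝ) - (k : ℝ) - 1) * ((k : ℝ) - r) /
        ((k : ℝ) * ((ν : ℝ) - (k : ℝ) + r)) := by
  classical
  have hν : Fintype.card V = ν := hsrg.card
  obtain ⟨x0, y0, hxy⟩ := hdiam_eq
  -- structural facts
  have hne0 : x0 ≠ y0 := by
    intro h; subst h; rw [SimpleGraph.dist_self] at hxy; omega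
  have hnadj : ¬ G.Adj x0 y0 := by
    intro h
    have := SimpleGraph.dist_eq_one_iff_adj.mpr h
    omega
  obtain ⟨w, hw⟩ := (hconn x0 y0).exists_walk_length_eq_dist
  rw [hxy] at hw
  set z := w.getVert 1 with hz
  have hadj1 : G.Adj x0 z := by
    have := w.adj_getVert_succ (i := 0) (by omega)
    rwa [w.getVert_zero] at this
  have hadj2 : G.Adj z y0 := by
    have := w.adj_getVert_succ (i := 1) (by omega)
    have h2 : w.getVert 2 = y0 := by
      have := w.getVert_length
      rwa [hw] at this
    rwa [h2] at this
  have hk1 : 1 ≤ k := by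
    have : 0 < G.degree x0 := G.degree_pos_iff_exists_adj x0 |>.mpr ⟨z, hadj1⟩
    rw [hsrg.regular x0] at this
    omega
  have hμ1 : 1 ≤ μ := by
    have hcard := hsrg.of_not_adj hne0 hnadj
    have : 0 < Fintype.card (G.commonNeighbors x0 y0) := by
      apply Fintype.card_pos_iff.mpr
      exact ⟨⟨z, (G.mem_commonNeighbors).mpr ⟨hadj1, hadj2.symm⟩⟩⟩
    omega
  have hμk : μ ≤ k := by
    have h1 := G.card_commonNeighbors_le_degree_left x0 y0
    rw [hsrg.of_not_adj hne0 hnadj, hsrg.regular x0] at h1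
    exact h1
  have hlk : l + 1 ≤ k := by
    have h1 := hadj1.card_commonNeighbors_lt_degree
    rw [hsrg.of_adj x0 z hadj1, hsrg.regular x0] at h1
    omega
  have hνk2 : k + 2 ≤ ν := by
    have hss : (insert y0 (insert x0 (G.neighborFinset x0))).card = k + 2 := by
      rw [Finset.card_insert_of_notMem, Finset.card_insert_of_notMem
        (G.notMem_neighborFinset_self x0), G.card_neighborFinset_eq_degree,
        hsrg.regular x0]
      simp only [Finset.mem_insert, SimpleGraph.mem_neighborFinset]
      push_neg
      exact ⟨fun h => hne0 h.symm, fun h => hnadj h⟩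
    calc k + 2 = (insert y0 (insert x0 (G.neighborFinset x0))).card := hss.symm
      _ ≤ Fintype.card V := Finset.card_le_univ _
      _ = ν := hν
  -- eigenvalue facts
  set disc : ℝ := ((l : ℝ) - μ) ^ 2 + 4 * ((k : ℝ) - μ) with hdisc
  have hkμR : (0 : ℝ) ≤ (k : ℝ) - μ := by
    have : (μ : ℝ) ≤ k := by exact_mod_cast hμk
    linarith
  have hd0 : 0 ≤ disc := by positivity
  have hdpos : 0 < disc := by
    rcases lt_or_eq_of_le hμk with h | h
    · have : (4 : ℝ) ≤ 4 * ((k : ℝ) - μ) := by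
        have : (μ : ℝ) + 1 ≤ k := by exact_mod_cast h
        linarith
      nlinarith [sq_nonneg ((l : ℝ) - μ)]
    · subst h
      have hlμ : l + 1 ≤ μ := hlk
      have : (l : ℝ) + 1 ≤ μ := by exact_mod_cast hlμ
      rw [hdisc]
      nlinarith
  have hsqd : Real.sqrt disc ^ 2 = disc := Real.sq_sqrt hd0
  have hsqd_pos : 0 < Real.sqrt disc := Real.sqrt_pos.mpr hdpos
  set s : ℝ := (((l : ℝ) - μ) - Real.sqrt disc) / 2 with hs
  have hrs : r + s = (l : ℝ) - μ := by rw [hr, hs]; ring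
  have hprod : r * s = -((k : ℝ) - μ) := by
    rw [hr, hs]
    have : (((l : ℝ) - μ) + Real.sqrt disc) / 2 * ((((l : ℝ) - μ) - Real.sqrt disc) / 2)
        = (((l : ℝ) - μ) ^ 2 - Real.sqrt disc ^ 2) / 4 := by ring
    rw [this, hsqd, hdisc]
    ring
  have hlt : s < r := by
    rw [hr, hs]
    linarith
  have hr0 : 0 ≤ r := by
    have h1 : ((l : ℝ) - μ) ^ 2 ≤ disc := by rw [hdisc]; linarith
    have h2 : |(l : ℝ) - μ| ≤ Real.sqrt disc := by
      rw [← Real.sqrt_sq_eq_abs]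
      exact Real.sqrt_le_sqrt h1
    have h3 := neg_abs_le ((l : ℝ) - μ)
    rw [hr]
    linarith
  have hkr : r < k := by
    have hklR : (l : ℝ) + 1 ≤ k := by exact_mod_cast hlk
    have hμ1R : (1 : ℝ) ≤ μ := by exact_mod_cast hμ1
    have hk1R : (1 : ℝ) ≤ k := by exact_mod_cast hk1
    have hy : (0 : ℝ) < 2 * k - ((l : ℝ) - μ) := by linarith
    have hlt2 : Real.sqrt disc < 2 * k - ((l : ℝ) - μ) := by
      rw [show (2 : ℝ) * k - ((l : ℝ) - μ) = Real.sqrt ((2 * k - ((l : ℝ) - μ)) ^ 2) from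
        (Real.sqrt_sq (le_of_lt hy)).symm]
      apply Real.sqrt_lt_sqrt hd0
      rw [hdisc]
      nlinarith
    rw [hr]
    linarith
  have hνR : ((k : ℝ) + 2 ≤ ν) := by exact_mod_cast hνk2
  have hplus : 0 ≤ (ν : ℝ) - k + r := by linarith
  have hdist2 : ∀ u v : V, u ≠ v → ¬ G.Adj u v → G.dist u v = 2 := by
    intro u v huv hnadj'
    have h1 := hdiam_le u v
    have h2 : G.dist u v ≠ 1 := fun h => hnadj' (SimpleGraph.dist_eq_one_iff_adj.mp h)
    have h3 : 0 < G.dist u v := hconn.pos_dist_of_ne huv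
    omega
  -- the set
  set S : Set ℝ := {D : ℝ | ∃ (m : ℕ) (ρ : V → EuclideanSpace ℝ (Fin m)),
    ∀ x y : V, (G.dist x y : ℝ) ≤ ‖ρ x - ρ y‖ ∧ ‖ρ x - ρ y‖ ≤ D * (G.dist x y : ℝ)} with hS
  set R : ℝ := 4 * ((ν : ℝ) - (k : ℝ) - 1) * ((k : ℝ) - r) /
      ((k : ℝ) * ((ν : ℝ) - (k : ℝ) + r)) with hR
  have hR0 : 0 ≤ R := by
    rw [hR]
    apply div_nonneg
    · have : (0:ℝ) ≤ (ν : ℝ) - k - 1 := by linarith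
      have h2 : (0:ℝ) ≤ (k : ℝ) - r := by linarith
      positivity
    · have hk0 : (0:ℝ) < (k:ℝ) := by exact_mod_cast hk1
      positivity
  -- nonemptiness
  have hSne : S.Nonempty := by
    refine ⟨5, Fintype.card V, fun v => EuclideanSpace.single (Fintype.equivFin V v) (3 : ℝ), ?_⟩
    intro x y
    by_cases hxy' : x = y
    · subst hxy'
      simp [SimpleGraph.dist_self]
    · have hne : Fintype.equivFin V x ≠ Fintype.equivFin V y := by
        simp [hxy']
      have hnormsq : ‖EuclideanSpace.single (Fintype.equivFin V x) (3 : ℝ)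
          - EuclideanSpace.single (Fintype.equivFin V y) (3 : ℝ)‖ ^ 2 = 18 := by
        rw [EuclideanSpace.norm_eq, Real.sq_sqrt (by positivity)]
        have hpt : ∀ i : Fin (Fintype.card V),
            ‖(EuclideanSpace.single (Fintype.equivFin V x) (3 : ℝ)
              - EuclideanSpace.single (Fintype.equivFin V y) (3 : ℝ)) i‖ ^ 2
            = (if i = Fintype.equivFin V x then (9:ℝ) else 0)
              + (if i = Fintype.equivFin V y then (9:ℝ) else 0) := by
          intro i
          have : (EuclideanSpace.single (Fintype.equivFin V x) (3 : ℝ)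
              - EuclideanSpace.single (Fintype.equivFin V y) (3 : ℝ)) i
              = (if i = Fintype.equivFin V x then (3:ℝ) else 0)
                - (if i = Fintype.equivFin V y then (3:ℝ) else 0) := by
            simp [EuclideanSpace.single_apply]
          rw [this, Real.norm_eq_abs, sq_abs]
          by_cases h1 : i = Fintype.equivFin V x
          · have h2 : ¬ (i = Fintype.equivFin V y) := by
              rw [h1]; exact fun h => hne h
            rw [if_pos h1, if_neg h2, if_pos h1, if_neg h2]
            norm_num
          · by_cases h2 : i = Fintype.equivFin V y
            · rw [if_neg h1, if_pos h2, if_neg h1, if_pos h2]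
              norm_num
            · rw [if_neg h1, if_neg h2, if_neg h1, if_neg h2]
              norm_num
        rw [Finset.sum_congr rfl fun i _ => hpt i, Finset.sum_add_distrib,
          Finset.sum_ite_eq' Finset.univ (Fintype.equivFin V x) (fun _ => (9:ℝ)),
          Finset.sum_ite_eq' Finset.univ (Fintype.equivFin V y) (fun _ => (9:ℝ))]
        norm_num
      set nn := ‖EuclideanSpace.single (Fintype.equivFin V x) (3 : ℝ)
          - EuclideanSpace.single (Fintype.equivFin V y) (3 : ℝ)‖
      have hnn0 : 0 ≤ nn := norm_nonneg _
      have hup : nn ≤ 5 := by nlinarith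
      have hlow : 3 ≤ nn := by nlinarith
      have hd1 : 1 ≤ G.dist x y := hconn.pos_dist_of_ne hxy'
      have hd2 : G.dist x y ≤ 2 := hdiam_le x y
      constructor
      · have : (G.dist x y : ℝ) ≤ 2 := by exact_mod_cast hd2
        linarith
      · have : (1 : ℝ) ≤ (G.dist x y : ℝ) := by exact_mod_cast hd1
        nlinarith
  -- lower bound
  have hlb : ∀ D ∈ S, Real.sqrt R ≤ D := by
    intro D hD
    obtain ⟨m, ρ, hρ⟩ := hD
    have hD1 : 1 ≤ D := by
      have h1 := (hρ x0 z).1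
      have h2 := (hρ x0 z).2
      rw [SimpleGraph.dist_eq_one_iff_adj.mpr hadj1] at h1 h2
      push_cast at h1 h2
      linarith
    have hD0 : 0 ≤ D := by linarith
    have hemb := embed_bound G hsrg r s hrs hprod hlt (by omega) (le_of_lt hkr) hplus
      hdist2 D hD0 m ρ hρ
    have hν0 : (0:ℝ) < ν := by
      have : 0 < ν := by omega
      exact_mod_cast this
    have hmain : 4 * ((ν : ℝ) - k - 1) * ((k : ℝ) - r) ≤ (k : ℝ) * ((ν : ℝ) - k + r) * D ^ 2 := by
      have h1 : (ν:ℝ) * (4 * ((ν : ℝ) - k - 1) * ((k : ℝ) - r))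
          ≤ (ν:ℝ) * ((k : ℝ) * ((ν : ℝ) - k + r) * D ^ 2) := by
        calc (ν:ℝ) * (4 * ((ν : ℝ) - k - 1) * ((k : ℝ) - r))
            = 4 * (ν : ℝ) * ((ν : ℝ) - k - 1) * ((k : ℝ) - r) := by ring
          _ ≤ (ν : ℝ) * k * ((ν : ℝ) - k + r) * D ^ 2 := hemb
          _ = (ν:ℝ) * ((k : ℝ) * ((ν : ℝ) - k + r) * D ^ 2) := by ring
      exact (mul_le_mul_iff_right₀ hν0).mp h1
    have hden : (0:ℝ) < (k : ℝ) * ((ν : ℝ) - k + r) := by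
      have hk0 : (0:ℝ) < (k:ℝ) := by exact_mod_cast hk1
      have : (0:ℝ) < (ν : ℝ) - k + r := by linarith
      positivity
    have hRD : R ≤ D ^ 2 := by
      rw [hR, div_le_iff₀ hden]
      calc 4 * ((ν : ℝ) - k - 1) * ((k : ℝ) - r)
          ≤ (k : ℝ) * ((ν : ℝ) - k + r) * D ^ 2 := hmain
        _ = D ^ 2 * ((k : ℝ) * ((ν : ℝ) - k + r)) := by ring
    calc Real.sqrt R ≤ Real.sqrt (D ^ 2) := Real.sqrt_le_sqrt hRD
      _ = D := Real.sqrt_sq hD0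
  have hgesqrt : Real.sqrt R ≤ sInf S := le_csInf hSne hlb
  have hfinal : R ≤ sInf S ^ 2 := by
    calc R = Real.sqrt R ^ 2 := (Real.sq_sqrt hR0).symm
      _ ≤ sInf S ^ 2 := by
        apply pow_le_pow_left₀ (Real.sqrt_nonneg R) hgesqrt
  rw [ge_iff_le, show leastDistortion G = sInf S from rfl]
  exact hfinal
end

section
/- Let G be a connected strongly regular graph of diameter 2 with parameters (ν, k, λ, μ), adjacency matrix A, and let r = (1/2)·((λ − μ) + √((λ − μ)^2 + 4(k − μ))). Set α = (k − r)/(ν − k + r). Then the matrix Q_α = (k − α·(ν − k − 1))·I − A + α·(J − I − A) is positive semidefinite, where I is the identity matrix and J the all-ones matrix; moreover all row sums of Q_α vanish. -/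
open scoped BigOperators

set_option maxHeartbeats 1000000 in
/-- For a connected strongly regular graph of diameter `2` with parameters
`(ν, k, λ, μ)`, adjacency matrix `A`, larger nontrivial eigenvalue
`r = ((λ−μ) + √((λ−μ)² + 4(k−μ)))/2` and `α = (k−r)/(ν−k+r)`, the matrix
`Q_α = (k − α(ν−k−1))·I − A + α·(J − I − A)` is positive semidefinite and all
its row sums vanish. -/
theorem stmt15 {V : Type*} [Fintype V] [DecidableEq V]
    (G : SimpleGraph V) [DecidableRel G.Adj]
    (ν k l μ : ℕ) (hsrg : G.IsSRGWith ν k l μ) (hconn : G.Connected)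
    (hdiam_le : ∀ x y : V, G.dist x y ≤ 2) (hdiam_eq : ∃ x y : V, G.dist x y = 2)
    (r α : ℝ)
    (hr : r = (((l : ℝ) - (μ : ℝ)) +
      Real.sqrt (((l : ℝ) - (μ : ℝ)) ^ 2 + 4 * ((k : ℝ) - (μ : ℝ)))) / 2)
    (hα : α = ((k : ℝ) - r) / ((ν : ℝ) - (k : ℝ) + r))
    (Q : Matrix V V ℝ)
    (hQ : Q = ((k : ℝ) - α * ((ν : ℝ) - (k : ℝ) - 1)) • (1 : Matrix V V ℝ) -
      G.adjMatrix ℝ +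
      α • ((Matrix.of fun _ _ => (1 : ℝ)) - 1 - G.adjMatrix ℝ)) :
    Q.PosSemidef ∧ ∀ x : V, ∑ y : V, Q x y = 0 := by
  classical
  -- ### Part 1: combinatorial facts
  obtain ⟨x0, y0, hxy⟩ := hdiam_eq
  have hne : x0 ≠ y0 := by
    intro h; rw [h, SimpleGraph.dist_self] at hxy; omega
  have hnadj : ¬ G.Adj x0 y0 := by
    intro h
    rw [← SimpleGraph.dist_eq_one_iff_adj] at h
    omega
  obtain ⟨p, hp⟩ := (hconn x0 y0).exists_walk_length_eq_dist
  rw [hxy] at hp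
  have hkey : l + 1 ≤ k ∧ μ ≤ k ∧ k + 1 ≤ ν := by
    cases p with
    | nil => simp at hp
    | @cons _ z _ h q =>
      cases q with
      | nil => simp at hp
      | @cons _ w _ h' q' =>
        cases q' with
        | cons h'' q'' => simp at hp
        | nil =>
          have hzmem : z ∈ G.commonNeighbors x0 y0 := ⟨h, h'.symm⟩
          have hμc : Fintype.card (G.commonNeighbors x0 y0) = μ :=
            hsrg.of_not_adj hne hnadj
          have hμk : μ ≤ k := by
            rw [← hμc, ← hsrg.regular x0]
            exact G.card_commonNeighbors_le_degree_left x0 y0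
          have hlk : l + 1 ≤ k := by
            have := h.card_commonNeighbors_lt_degree
            rw [hsrg.of_adj _ _ h, hsrg.regular x0] at this
            omega
          have hkν : k + 1 ≤ ν := by
            have := G.degree_lt_card_verts x0
            rw [hsrg.regular x0, hsrg.card] at this
            omega
          exact ⟨hlk, hμk, hkν⟩
  obtain ⟨hlk, hμk, hkν⟩ := hkey
  have hν0 : 0 < ν := by omega
  -- ### Part 2: real number facts
  have hkμR : (0:ℝ) ≤ (k:ℝ) - μ := by
    have : (μ:ℝ) ≤ k := Nat.cast_le.mpr hμk
    linarith
  have hD : (0:ℝ) ≤ ((l : ℝ) - (μ : ℝ)) ^ 2 + 4 * ((k : ℝ) - (μ : ℝ)) := by positivity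
  have hsq := Real.sq_sqrt hD
  set s : ℝ := Real.sqrt (((l : ℝ) - (μ : ℝ)) ^ 2 + 4 * ((k : ℝ) - (μ : ℝ))) with hs
  have h1 : r ^ 2 = ((l:ℝ) - μ) * r + ((k:ℝ) - μ) := by
    rw [hr]; linear_combination (1/4) * hsq
  have hs0 : 0 ≤ s := Real.sqrt_nonneg _
  have hsge : (μ:ℝ) - l ≤ s := by
    have h' : |(l:ℝ) - μ| ≤ s := by
      rw [← Real.sqrt_sq_eq_abs]
      exact Real.sqrt_le_sqrt (by nlinarith)
    have := neg_abs_le ((l:ℝ) - μ)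
    linarith
  have hr0 : 0 ≤ r := by rw [hr]; linarith
  have hm : (0:ℝ) < (ν:ℝ) - k + r := by
    have : (k:ℝ) + 1 ≤ ν := by exact_mod_cast Nat.cast_le.mpr hkν
    linarith
  have h3 : α * ((ν:ℝ) - k + r) = (k:ℝ) - r := by
    rw [hα]; field_simp
  have h2 : (k:ℝ) * ((k:ℝ) - l - 1) = ((ν:ℝ) - k - 1) * μ := by
    have e := SimpleGraph.IsSRGWith.param_eq G hsrg hν0
    have e1 : ((k - l - 1 : ℕ) : ℝ) = (k:ℝ) - l - 1 := by
      have h' : k - l - 1 + (l + 1) = k := by omega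
      have := congrArg (Nat.cast : ℕ → ℝ) h'
      push_cast at this; linarith
    have e2 : ((ν - k - 1 : ℕ) : ℝ) = (ν:ℝ) - k - 1 := by
      have h' : ν - k - 1 + (k + 1) = ν := by omega
      have := congrArg (Nat.cast : ℕ → ℝ) h'
      push_cast at this; linarith
    have := congrArg (Nat.cast : ℕ → ℝ) e
    push_cast at this
    rw [e1, e2] at this
    exact this
  have h1α : 0 < 1 + α := by
    have : (1 + α) * ((ν:ℝ) - k + r) = (ν:ℝ) := by linear_combination h3
    have hν : (0:ℝ) < ν := by exact_mod_cast hν0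
    nlinarith
  have hsr : s = 2 * r - ((l:ℝ) - μ) := by rw [hr]; ring
  have hc0 : 0 ≤ (1+α) * (2*r - ((l:ℝ)-μ)) := by
    apply mul_nonneg h1α.le
    rw [← hsr]; exact hs0
  -- ### Part 3: matrix identities
  set A : Matrix V V ℝ := G.adjMatrix ℝ with hAdef
  set J : Matrix V V ℝ := Matrix.of (fun _ _ => (1:ℝ)) with hJdef
  have hArow : ∀ i : V, ∑ y : V, A i y = (k:ℝ) := by
    intro i
    have hcard : (Finset.univ.filter (G.Adj i)).card = k := by
      rw [← SimpleGraph.neighborFinset_eq_filter]; exact hsrg.regular i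
    rw [hAdef]
    simp only [SimpleGraph.adjMatrix_apply]
    rw [Finset.sum_boole, hcard]
  have hAcol : ∀ j : V, ∑ y : V, A y j = (k:ℝ) := by
    intro j
    have hsymm : ∀ y : V, A y j = A j y := by
      intro y; simp [hAdef, SimpleGraph.adjMatrix_apply, G.adj_comm]
    simp_rw [hsymm]; exact hArow j
  have hAJ : A * J = (k:ℝ) • J := by
    ext i j
    simp [Matrix.mul_apply, hJdef, hArow i]
  have hJA : J * A = (k:ℝ) • J := by
    ext i j
    simp [Matrix.mul_apply, hJdef, hAcol j]
  have hJJ : J * J = (ν:ℝ) • J := by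
    ext i j
    simp [Matrix.mul_apply, hJdef, Finset.card_univ, hsrg.card]
  have hcompl : Gᶜ.adjMatrix ℝ = J - 1 - A := by
    ext i j
    by_cases hij : i = j
    · subst hij; simp [hJdef, hAdef]
    · by_cases hadj : G.Adj i j
      · simp [hJdef, hAdef, SimpleGraph.adjMatrix_apply, SimpleGraph.compl_adj, hij, hadj,
          Matrix.one_apply_ne hij]
      · simp [hJdef, hAdef, SimpleGraph.adjMatrix_apply, SimpleGraph.compl_adj, hij, hadj,
          Matrix.one_apply_ne hij]
  have hA2 : A * A = ((k:ℝ) - μ) • (1 : Matrix V V ℝ) + ((l:ℝ) - μ) • A + (μ:ℝ) • J := by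
    have hme := hsrg.matrix_eq (α := ℝ)
    rw [hcompl] at hme
    rw [show A * A = A ^ 2 from (sq A).symm, hAdef]
    rw [hme]
    simp only [← Nat.cast_smul_eq_nsmul ℝ]
    module
  -- ### Part 4: Q in standard form and Q² = c Q
  have hQ' : Q = ((k:ℝ) - α*((ν:ℝ)-k)) • (1 : Matrix V V ℝ) + (-(1+α)) • A + α • J := by
    rw [hQ]; module
  have hQsq : Q * Q = ((1+α) * (2*r - ((l:ℝ)-μ))) • Q := by
    rw [hQ']
    simp only [Matrix.add_mul, Matrix.mul_add, smul_mul_assoc, mul_smul_comm,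
      Matrix.one_mul, Matrix.mul_one, hAJ, hJA, hJJ, hA2, smul_add, smul_smul]
    match_scalars
    · linear_combination (-(1+α)^2) * h1 +
        (α*((ν:ℝ)-k+r) - ((k:ℝ)-r) + (1+α)*((μ:ℝ)-l)) * h3
    · linear_combination 2*(1+α) * h3
    · have hm2 : ((ν:ℝ) - k + r)^2 ≠ 0 := by positivity
      have key : ((ν:ℝ) - k + r)^2 * ((-(1+α)) * (-(1+α)) * (μ:ℝ) + α*α*(ν:ℝ)
          + 2*((k:ℝ) - α*((ν:ℝ)-k))*α + 2*(-(1+α))*α*(k:ℝ)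
          - ((1+α) * (2*r - ((l:ℝ)-μ))) * α) = 0 := by
        linear_combination (ν:ℝ) * h1 + (-(ν:ℝ)) * h2 +
          ((-2*α*((ν:ℝ)-k+r)^2) + (((ν:ℝ)-k+r)*((μ:ℝ)+l-2*k))
            + (2*((k:ℝ)-r) + (α*((ν:ℝ)-k+r) - ((k:ℝ)-r)))*((ν:ℝ)+l-2*k)) * h3
      have hz := mul_eq_zero.mp key
      rcases hz with h | h
      · exact absurd h hm2
      · linear_combination h
  have hJT : J.transpose = J := by
    ext i j; simp [hJdef, Matrix.transpose_apply]
  have hQT : Q.transpose = Q := by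
    rw [hQ']
    simp [Matrix.transpose_add, Matrix.transpose_smul, Matrix.transpose_one, hJT,
      hAdef, SimpleGraph.transpose_adjMatrix]
  -- ### Part 5: conclusion
  constructor
  · rw [Matrix.posSemidef_iff_dotProduct_mulVec]
    constructor
    · show Q.conjTranspose = Q
      have : Q.conjTranspose = Q.transpose := by
        ext i j
        simp [Matrix.conjTranspose_apply, Matrix.transpose_apply]
      rw [this, hQT]
    · intro x
      simp only [star_trivial]
      obtain ⟨cc, hcc⟩ : ∃ cc : ℝ, cc = (1+α) * (2*r - ((l:ℝ)-μ)) := ⟨_, rfl⟩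
      rw [← hcc] at hQsq
      have hc0' : 0 ≤ cc := hcc ▸ hc0
      have key : cc * (dotProduct x (Q.mulVec x)) =
          dotProduct (Q.mulVec x) (Q.mulVec x) := by
        have e2 : Matrix.vecMul x Q = Q.mulVec x := by
          rw [← Matrix.vecMul_transpose, hQT]
        have e1 : dotProduct x ((Q * Q).mulVec x) =
            dotProduct (Q.mulVec x) (Q.mulVec x) := by
          rw [← Matrix.mulVec_mulVec, Matrix.dotProduct_mulVec, e2]
        rw [← e1, hQsq, Matrix.smul_mulVec, dotProduct_smul, smul_eq_mul]
      have hQx2 : 0 ≤ dotProduct (Q.mulVec x) (Q.mulVec x) := by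
        apply Finset.sum_nonneg
        intro i _
        exact mul_self_nonneg _
      rcases eq_or_lt_of_le hc0' with hc | hc
      · have hzero : dotProduct (Q.mulVec x) (Q.mulVec x) = 0 := by
          rw [← key, ← hc, zero_mul]
        have hQx : Q.mulVec x = 0 := dotProduct_self_eq_zero.mp hzero
        rw [hQx]
        simp
      · nlinarith [key, hQx2]
  · intro x
    rw [hQ']
    simp only [Matrix.add_apply, Matrix.smul_apply, Matrix.one_apply, hJdef, Matrix.of_apply,
      smul_eq_mul, mul_ite, mul_one, mul_zero]
    rw [Finset.sum_add_distrib, Finset.sum_add_distrib, Finset.sum_ite_eq Finset.univ x,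
      ← Finset.mul_sum, hArow x]
    simp only [Finset.mem_univ, if_true, Finset.sum_const, Finset.card_univ, hsrg.card,
      nsmul_eq_mul]
    linarith [h3]
end
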